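/- Let G be a real symmetric nondegenerate 4×4 matrix such that for every i ∈ {1,2,3,4} the 3×3 principal submatrix G_{\hat i} obtained by deleting the i-th row and column has inertia (1,2). Then In(G) ∈ {(1,3),(2,2)}; moreover det G < 0 if and only if In(G) = (1,3), and det G > 0 if and only if In(G) = (2,2). -/
import Mathlib

open Matrix

noncomputable section

/-- Inertia `In(G) = (n₋(G), n₊(G))`: the numbers of negative and positive eigenvalues of a
real symmetric matrix, counted with multiplicity. -/
def inertia {n : ℕ} (G : Matrix (Fin n) (Fin n) ℝ) : ℕ × ℕ :=
  if hG : G.IsHermitian then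
    ((Finset.univ.filter fun i => hG.eigenvalues i < 0).card,
     (Finset.univ.filter fun i => 0 < hG.eigenvalues i).card)
  else (0, 0)

namespace InertiaAux

variable {n m : ℕ}

/-- Quadratic form via eigen-coordinates. -/
lemma quad_eq {A : Matrix (Fin n) (Fin n) ℝ} (hA : A.IsHermitian) (x : Fin n → ℝ) :
    x ⬝ᵥ (A *ᵥ x)
      = ∑ i, hA.eigenvalues i *
          ((hA.eigenvectorUnitary : Matrix (Fin n) (Fin n) ℝ)ᵀ *ᵥ x) i ^ 2 := by
  set U := (hA.eigenvectorUnitary : Matrix (Fin n) (Fin n) ℝ) with hU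
  have hsU : star U = Uᵀ := by
    rw [Matrix.star_eq_conjTranspose, Matrix.conjTranspose_eq_transpose_of_trivial]
  have h1 : A = U * Matrix.diagonal hA.eigenvalues * Uᵀ := by
    rw [← hsU]
    simpa using hA.spectral_theorem
  conv_lhs => rw [h1, Matrix.mul_assoc, ← Matrix.mulVec_mulVec,
    Matrix.dotProduct_mulVec, ← Matrix.transpose_transpose U, Matrix.vecMul_transpose,
    Matrix.transpose_transpose, ← Matrix.mulVec_mulVec]
  simp only [dotProduct, Matrix.mulVec_diagonal]
  exact Finset.sum_congr rfl fun i _ => by ring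

lemma card_le_pos {A : Matrix (Fin n) (Fin n) ℝ} (hA : A.IsHermitian)
    {ι : Type} [Fintype ι] [DecidableEq ι] (v : ι → (Fin n → ℝ))
    (hv : ∀ c : ι → ℝ, c ≠ 0 → 0 < (∑ i, c i • v i) ⬝ᵥ (A *ᵥ ∑ i, c i • v i)) :
    Fintype.card ι ≤ (Finset.univ.filter fun i => 0 < hA.eigenvalues i).card := by
  classical
  set U := (hA.eigenvectorUnitary : Matrix (Fin n) (Fin n) ℝ) with hU
  let L1 : (ι → ℝ) →ₗ[ℝ] (Fin n → ℝ) :=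
    { toFun := fun c => ∑ i, c i • v i
      map_add' := fun a b => by
        simp only [Pi.add_apply, add_smul]
        rw [Finset.sum_add_distrib]
      map_smul' := fun r a => by
        simp only [Pi.smul_apply, smul_eq_mul, RingHom.id_apply, ← smul_smul]
        rw [← Finset.smul_sum] }
  let T : (ι → ℝ) →ₗ[ℝ] ({i : Fin n // 0 < hA.eigenvalues i} → ℝ) :=
    (LinearMap.funLeft ℝ ℝ Subtype.val) ∘ₗ (Matrix.mulVecLin Uᵀ) ∘ₗ L1
  have hinj : Function.Injective T := by
    rw [← LinearMap.ker_eq_bot, LinearMap.ker_eq_bot']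
    intro c hc
    by_contra hc0
    have hq := hv c hc0
    rw [quad_eq hA] at hq
    have hle : ∑ i, hA.eigenvalues i * (Uᵀ *ᵥ (∑ i, c i • v i)) i ^ 2 ≤ 0 := by
      apply Finset.sum_nonpos
      intro i _
      by_cases hpos : 0 < hA.eigenvalues i
      · have hz : (Uᵀ *ᵥ (∑ i, c i • v i)) i = 0 := by
          exact congrFun hc ⟨i, hpos⟩
        rw [hz]
        simp
      · exact mul_nonpos_of_nonpos_of_nonneg (le_of_not_gt hpos) (sq_nonneg _)
    exact absurd hq (not_lt.mpr hle)
  have hfr := LinearMap.finrank_le_finrank_of_injective hinj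
  rw [Module.finrank_fintype_fun_eq_card, Module.finrank_fintype_fun_eq_card] at hfr
  rwa [Fintype.card_subtype] at hfr

lemma card_le_neg {A : Matrix (Fin n) (Fin n) ℝ} (hA : A.IsHermitian)
    {ι : Type} [Fintype ι] [DecidableEq ι] (v : ι → (Fin n → ℝ))
    (hv : ∀ c : ι → ℝ, c ≠ 0 → (∑ i, c i • v i) ⬝ᵥ (A *ᵥ ∑ i, c i • v i) < 0) :
    Fintype.card ι ≤ (Finset.univ.filter fun i => hA.eigenvalues i < 0).card := by
  classical
  set U := (hA.eigenvectorUnitary : Matrix (Fin n) (Fin n) ℝ) with hU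
  let L1 : (ι → ℝ) →ₗ[ℝ] (Fin n → ℝ) :=
    { toFun := fun c => ∑ i, c i • v i
      map_add' := fun a b => by
        simp only [Pi.add_apply, add_smul]
        rw [Finset.sum_add_distrib]
      map_smul' := fun r a => by
        simp only [Pi.smul_apply, smul_eq_mul, RingHom.id_apply, ← smul_smul]
        rw [← Finset.smul_sum] }
  let T : (ι → ℝ) →ₗ[ℝ] ({i : Fin n // hA.eigenvalues i < 0} → ℝ) :=
    (LinearMap.funLeft ℝ ℝ Subtype.val) ∘ₗ (Matrix.mulVecLin Uᵀ) ∘ₗ L1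
  have hinj : Function.Injective T := by
    rw [← LinearMap.ker_eq_bot, LinearMap.ker_eq_bot']
    intro c hc
    by_contra hc0
    have hq := hv c hc0
    rw [quad_eq hA] at hq
    have hle : 0 ≤ ∑ i, hA.eigenvalues i * (Uᵀ *ᵥ (∑ i, c i • v i)) i ^ 2 := by
      apply Finset.sum_nonneg
      intro i _
      by_cases hneg : hA.eigenvalues i < 0
      · have hz : (Uᵀ *ᵥ (∑ i, c i • v i)) i = 0 := by
          exact congrFun hc ⟨i, hneg⟩
        rw [hz]
        simp
      · exact mul_nonneg (le_of_not_gt hneg) (sq_nonneg _)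
    exact absurd hq (not_lt.mpr hle)
  have hfr := LinearMap.finrank_le_finrank_of_injective hinj
  rw [Module.finrank_fintype_fun_eq_card, Module.finrank_fintype_fun_eq_card] at hfr
  rwa [Fintype.card_subtype] at hfr

lemma exists_pos_family {A : Matrix (Fin n) (Fin n) ℝ} (hA : A.IsHermitian) :
    ∃ v : {i : Fin n // 0 < hA.eigenvalues i} → (Fin n → ℝ),
      ∀ c : {i : Fin n // 0 < hA.eigenvalues i} → ℝ, c ≠ 0 → 0 < (∑ p, c p • v p) ⬝ᵥ (A *ᵥ ∑ p, c p • v p) := by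
  classical
  set U := (hA.eigenvectorUnitary : Matrix (Fin n) (Fin n) ℝ) with hU
  refine ⟨fun p => fun k => U k p.1, fun c hc => ?_⟩
  set c' : Fin n → ℝ := fun i => if h : 0 < hA.eigenvalues i then c ⟨i, h⟩ else 0 with hc'
  have hx : (∑ p, c p • fun k => U k p.1) = U *ᵥ c' := by
    funext k
    simp only [Matrix.mulVec, dotProduct, Finset.sum_apply, Pi.smul_apply,
      smul_eq_mul]
    rw [show (∑ i, U k i * c' i)
        = ∑ i ∈ Finset.univ.filter (fun i => 0 < hA.eigenvalues i), U k i * c' i by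
      refine (Finset.sum_filter_of_ne ?_).symm
      intro i _ hne
      by_contra h
      exact hne (by simp [hc', dif_neg h])]
    rw [Finset.sum_subtype (p := fun i => 0 < hA.eigenvalues i)
      (Finset.univ.filter fun i => 0 < hA.eigenvalues i)
      (fun x => by simp) (fun i => U k i * c' i)]
    refine Finset.sum_congr rfl fun p _ => ?_
    simp [hc', dif_pos p.2, mul_comm]
  have hUtU : Uᵀ *ᵥ (U *ᵥ c') = c' := by
    rw [Matrix.mulVec_mulVec]
    have hsU : star U = Uᵀ := by
      rw [Matrix.star_eq_conjTranspose, Matrix.conjTranspose_eq_transpose_of_trivial]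
    rw [← hsU, Unitary.coe_star_mul_self, Matrix.one_mulVec]
  rw [hx, quad_eq hA, hUtU]
  have hcp : ∃ p, c p ≠ 0 := Function.ne_iff.mp hc
  obtain ⟨p, hp⟩ := hcp
  apply Finset.sum_pos'
  · intro i _
    by_cases h : 0 < hA.eigenvalues i
    · exact mul_nonneg h.le (sq_nonneg _)
    · simp [hc', dif_neg h]
  · refine ⟨p.1, Finset.mem_univ _, ?_⟩
    have : c' p.1 = c p := by simp [hc', dif_pos p.2]
    rw [this]
    apply mul_pos p.2
    rw [pow_two]
    exact mul_self_pos.mpr hp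

lemma exists_neg_family {A : Matrix (Fin n) (Fin n) ℝ} (hA : A.IsHermitian) :
    ∃ v : {i : Fin n // hA.eigenvalues i < 0} → (Fin n → ℝ),
      ∀ c : {i : Fin n // hA.eigenvalues i < 0} → ℝ, c ≠ 0 → (∑ p, c p • v p) ⬝ᵥ (A *ᵥ ∑ p, c p • v p) < 0 := by
  classical
  set U := (hA.eigenvectorUnitary : Matrix (Fin n) (Fin n) ℝ) with hU
  refine ⟨fun p => fun k => U k p.1, fun c hc => ?_⟩
  set c' : Fin n → ℝ := fun i => if h : hA.eigenvalues i < 0 then c ⟨i, h⟩ else 0 with hc'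
  have hx : (∑ p, c p • fun k => U k p.1) = U *ᵥ c' := by
    funext k
    simp only [Matrix.mulVec, dotProduct, Finset.sum_apply, Pi.smul_apply,
      smul_eq_mul]
    rw [show (∑ i, U k i * c' i)
        = ∑ i ∈ Finset.univ.filter (fun i => hA.eigenvalues i < 0), U k i * c' i by
      refine (Finset.sum_filter_of_ne ?_).symm
      intro i _ hne
      by_contra h
      exact hne (by simp [hc', dif_neg h])]
    rw [Finset.sum_subtype (p := fun i => hA.eigenvalues i < 0)
      (Finset.univ.filter fun i => hA.eigenvalues i < 0)
      (fun x => by simp) (fun i => U k i * c' i)]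
    refine Finset.sum_congr rfl fun p _ => ?_
    simp [hc', dif_pos p.2, mul_comm]
  have hUtU : Uᵀ *ᵥ (U *ᵥ c') = c' := by
    rw [Matrix.mulVec_mulVec]
    have hsU : star U = Uᵀ := by
      rw [Matrix.star_eq_conjTranspose, Matrix.conjTranspose_eq_transpose_of_trivial]
    rw [← hsU, Unitary.coe_star_mul_self, Matrix.one_mulVec]
  rw [hx, quad_eq hA, hUtU]
  have hcp : ∃ p, c p ≠ 0 := Function.ne_iff.mp hc
  obtain ⟨p, hp⟩ := hcp
  have : 0 < ∑ i, -(hA.eigenvalues i * c' i ^ 2) := by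
    apply Finset.sum_pos'
    · intro i _
      by_cases h : hA.eigenvalues i < 0
      · simp only [neg_nonneg]
        exact mul_nonpos_of_nonpos_of_nonneg h.le (sq_nonneg _)
      · simp [hc', dif_neg h]
    · refine ⟨p.1, Finset.mem_univ _, ?_⟩
      have hcc : c' p.1 = c p := by simp [hc', dif_pos p.2]
      rw [hcc, neg_pos]
      apply mul_neg_of_neg_of_pos p.2
      rw [pow_two]
      exact mul_self_pos.mpr hp
  rw [Finset.sum_neg_distrib] at this
  linarith

/-- The extension-by-zero matrix along `f`. -/
def emb (f : Fin m → Fin n) : Matrix (Fin n) (Fin m) ℝ :=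
  Matrix.of fun k l => if k = f l then 1 else 0

lemma emb_conj (G : Matrix (Fin n) (Fin n) ℝ) (f : Fin m → Fin n) :
    (emb f)ᵀ * G * emb f = G.submatrix f f := by
  ext l l'
  simp [emb, Matrix.mul_apply, ite_mul, mul_ite]

lemma quad_emb (G : Matrix (Fin n) (Fin n) ℝ) (f : Fin m → Fin n) (x : Fin m → ℝ) :
    (emb f *ᵥ x) ⬝ᵥ (G *ᵥ (emb f *ᵥ x)) = x ⬝ᵥ (G.submatrix f f *ᵥ x) := by
  rw [Matrix.mulVec_mulVec, dotProduct_comm, Matrix.dotProduct_mulVec,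
    dotProduct_comm, ← Matrix.mulVec_transpose, Matrix.mulVec_mulVec,
    ← Matrix.mul_assoc, emb_conj]

end InertiaAux

open InertiaAux in
/-- If `G` is a real symmetric nondegenerate `4×4` matrix all of whose `3×3` principal
submatrices (deleting the `i`-th row and column) have inertia `(1,2)`, then
`In(G) ∈ {(1,3),(2,2)}`, with `det G < 0` iff `In(G) = (1,3)` and `det G > 0` iff
`In(G) = (2,2)`. -/
theorem inertia_from_lorentzian_minors (G : Matrix (Fin 4) (Fin 4) ℝ)
    (hsymm : G.IsSymm) (hdet : G.det ≠ 0)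
    (hmin : ∀ i : Fin 4, inertia (G.submatrix i.succAbove i.succAbove) = (1, 2)) :
    (inertia G = (1, 3) ∨ inertia G = (2, 2)) ∧
    (G.det < 0 ↔ inertia G = (1, 3)) ∧
    (0 < G.det ↔ inertia G = (2, 2)) := by
  classical
  have hG : G.IsHermitian := by
    rw [Matrix.IsHermitian, Matrix.conjTranspose_eq_transpose_of_trivial]
    exact hsymm.eq
  set μ : Fin 4 → ℝ := hG.eigenvalues with hμ
  have hdet' : G.det = ∏ i, μ i := by simpa using hG.det_eq_prod_eigenvalues
  have hμne : ∀ i, μ i ≠ 0 := by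
    intro i hi
    exact hdet (by rw [hdet']; exact Finset.prod_eq_zero (Finset.mem_univ i) hi)
  have hfilter : (Finset.univ.filter fun i => 0 < μ i)
      = Finset.univ.filter fun i => ¬ (μ i < 0) := by
    ext i
    simp only [Finset.mem_filter, Finset.mem_univ, true_and]
    constructor
    · exact fun h => not_lt.mpr h.le
    · exact fun h => lt_of_le_of_ne (not_lt.mp h) (Ne.symm (hμne i))
  have hcard : (Finset.univ.filter fun i => μ i < 0).card
      + (Finset.univ.filter fun i => 0 < μ i).card = 4 := by
    rw [hfilter, Finset.card_filter_add_card_filter_not]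
    simp
  have hinG : inertia G = ((Finset.univ.filter fun i => μ i < 0).card,
      (Finset.univ.filter fun i => 0 < μ i).card) := by
    rw [inertia, dif_pos hG]
  -- the principal submatrix deleting row/column 0
  set f : Fin 3 → Fin 4 := (0 : Fin 4).succAbove with hf
  set A : Matrix (Fin 3) (Fin 3) ℝ := G.submatrix f f with hA
  have hAH : A.IsHermitian := by
    rw [Matrix.IsHermitian, Matrix.conjTranspose_eq_transpose_of_trivial,
      Matrix.transpose_submatrix, hsymm.eq]
  have hmin0 := hmin 0
  rw [inertia, dif_pos hAH] at hmin0
  have hApos : (Finset.univ.filter fun l => 0 < hAH.eigenvalues l).card = 2 :=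
    (Prod.ext_iff.mp hmin0).2
  have hAneg : (Finset.univ.filter fun l => hAH.eigenvalues l < 0).card = 1 :=
    (Prod.ext_iff.mp hmin0).1
  -- push positive family forward
  have hsum : ∀ {ι : Type} [Fintype ι] (c : ι → ℝ) (v : ι → (Fin 3 → ℝ)),
      (∑ p, c p • (emb f *ᵥ v p)) = emb f *ᵥ (∑ p, c p • v p) := by
    intro ι _ c v
    rw [show (emb f *ᵥ (∑ p, c p • v p)) = (emb f).mulVecLin (∑ p, c p • v p) from rfl,
      map_sum]
    simp [Matrix.mulVecLin_apply, Matrix.mulVec_smul]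
  have hposle : 2 ≤ (Finset.univ.filter fun i => 0 < μ i).card := by
    obtain ⟨v, hv⟩ := exists_pos_family hAH
    have := card_le_pos hG (fun p => emb f *ᵥ v p) (fun c hc => by
      rw [hsum c v, quad_emb]
      exact hv c hc)
    rwa [Fintype.card_subtype, hApos] at this
  have hnegle : 1 ≤ (Finset.univ.filter fun i => μ i < 0).card := by
    obtain ⟨v, hv⟩ := exists_neg_family hAH
    have := card_le_neg hG (fun p => emb f *ᵥ v p) (fun c hc => by
      rw [hsum c v, quad_emb]
      exact hv c hc)
    rwa [Fintype.card_subtype, hAneg] at this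
  set nn := (Finset.univ.filter fun i => μ i < 0).card with hnn
  set np := (Finset.univ.filter fun i => 0 < μ i).card with hnp
  have hpp : 0 < ∏ i ∈ Finset.univ.filter fun i => 0 < μ i, μ i :=
    Finset.prod_pos fun i hi => (Finset.mem_filter.mp hi).2
  have hdet'' : G.det = (∏ i ∈ Finset.univ.filter fun i => μ i < 0, μ i)
      * ∏ i ∈ Finset.univ.filter fun i => 0 < μ i, μ i := by
    rw [hdet', hfilter, Finset.prod_filter_mul_prod_filter_not]
  have hcase : (nn = 1 ∧ np = 3) ∨ (nn = 2 ∧ np = 2) := by omega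
  rcases hcase with ⟨h1, h3⟩ | ⟨h2, h2'⟩
  · -- inertia (1,3), det < 0
    have h13 : inertia G = (1, 3) := by rw [hinG, h1, h3]
    obtain ⟨a, ha⟩ := Finset.card_eq_one.mp h1
    have hma : μ a < 0 := by
      have : a ∈ Finset.univ.filter fun i => μ i < 0 := by
        rw [ha]; exact Finset.mem_singleton_self a
      exact (Finset.mem_filter.mp this).2
    have hdneg : G.det < 0 := by
      rw [hdet'', ha, Finset.prod_singleton]
      exact mul_neg_of_neg_of_pos hma hpp
    refine ⟨Or.inl h13, ⟨fun _ => h13, fun _ => hdneg⟩, ?_, ?_⟩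
    · intro hd; exact absurd hd (not_lt.mpr hdneg.le)
    · intro h22; rw [h13] at h22; exact absurd h22 (by decide)
  · -- inertia (2,2), det > 0
    have h22 : inertia G = (2, 2) := by rw [hinG, h2, h2']
    obtain ⟨a, b, hab, hs⟩ := Finset.card_eq_two.mp h2
    have hma : μ a < 0 := by
      have : a ∈ Finset.univ.filter fun i => μ i < 0 := by
        rw [hs]; exact Finset.mem_insert_self a {b}
      exact (Finset.mem_filter.mp this).2
    have hmb : μ b < 0 := by
      have : b ∈ Finset.univ.filter fun i => μ i < 0 := by
        rw [hs]; simp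
      exact (Finset.mem_filter.mp this).2
    have hdpos : 0 < G.det := by
      rw [hdet'', hs, Finset.prod_pair hab]
      exact mul_pos (mul_pos_of_neg_of_neg hma hmb) hpp
    refine ⟨Or.inr h22, ⟨?_, ?_⟩, ⟨fun _ => h22, fun _ => hdpos⟩⟩
    · intro hd; exact absurd hdpos (not_lt.mpr hd.le)
    · intro h13; rw [h22] at h13; exact absurd h13 (by decide)
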